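/- Suppose G is a Hausdorff rectifiable space such that any two distinct points of G can be separated by a compact subset. Then either G is locally compact, or every σ-compact subspace of G is zero-dimensional. -/

import Mathlib

open Set Filter Topology

/-- In a compact, T2, totally disconnected space, disjoint closed sets can be
separated by a clopen set. -/
lemma aux_clopen_sep {Y : Type*} [TopologicalSpace Y] [CompactSpace Y] [T2Space Y]
    [TotallyDisconnectedSpace Y] {A B : Set Y} (hA : IsClosed A) (hB : IsClosed B)
    (hd : Disjoint A B) : ∃ P : Set Y, IsClopen P ∧ A ⊆ P ∧ Disjoint P B := by
  haveI : TotallySeparatedSpace Y := loc_compact_t2_tot_disc_iff_tot_sep.mp ‹_›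
  have key : ∀ x : Y, x ∉ B → ∃ u : Set Y, IsClopen u ∧ x ∈ u ∧ Disjoint u B := by
    intro x hx
    have hpt : ∀ y : ↥B, ∃ u : Set Y, IsClopen u ∧ x ∈ u ∧ (y : Y) ∈ uᶜ :=
      fun y => exists_isClopen_of_totally_separated (fun h => hx (h ▸ y.2))
    choose u hcl hxu hyu using hpt
    obtain ⟨t, ht⟩ := (hB.isCompact).elim_finite_subcover (fun y => (u y)ᶜ)
      (fun y => (hcl y).1.isOpen_compl) (fun z hz => mem_iUnion.mpr ⟨⟨z, hz⟩, hyu ⟨z, hz⟩⟩)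
    refine ⟨⋂ y ∈ t, u y, isClopen_biInter_finset (fun y _ => hcl y),
      mem_iInter₂.mpr (fun y _ => hxu y), ?_⟩
    rw [disjoint_left]
    intro z hz hzB
    obtain ⟨y, hyt, hzy⟩ := mem_iUnion₂.mp (ht hzB)
    exact hzy (mem_iInter₂.mp hz y hyt)
  have hptA : ∀ a : ↥A, ∃ u : Set Y, IsClopen u ∧ (a : Y) ∈ u ∧ Disjoint u B :=
    fun a => key a (disjoint_left.mp hd a.2)
  choose u hcl hau hub using hptA
  obtain ⟨t, ht⟩ := (hA.isCompact).elim_finite_subcover u (fun a => (hcl a).2)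
    (fun z hz => mem_iUnion.mpr ⟨⟨z, hz⟩, hau ⟨z, hz⟩⟩)
  refine ⟨⋃ a ∈ t, u a, isClopen_biUnion_finset (fun a _ => hcl a), ht, ?_⟩
  rw [disjoint_left]
  intro z hz hzB
  obtain ⟨a, _, hza⟩ := mem_iUnion₂.mp hz
  exact disjoint_left.mp (hub a) hza hzB

/-- If any two distinct points of a Hausdorff rectifiable space `G` can be
separated by a compactum, then either `G` is locally compact or every
σ-compact subspace of `G` is zero-dimensional. -/
theorem locallyCompact_or_sigmaCompact_zeroDim_of_separated_by_compacta
    {G : Type*} [TopologicalSpace G] [T2Space G] (e : G) (p q : G × G → G)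
    (hp : Continuous p) (hq : Continuous q)
    (hpq : ∀ x y : G, p (x, q (x, y)) = y)
    (hqp : ∀ x y : G, q (x, p (x, y)) = y)
    (hqe : ∀ x : G, q (x, x) = e)
    (hsep : ∀ x y : G, x ≠ y → ∃ (F U V : Set G), IsCompact F ∧
      IsOpen U ∧ IsOpen V ∧ x ∈ U ∧ y ∈ V ∧ Disjoint U V ∧ U ∪ V = Fᶜ) :
    LocallyCompactSpace G ∨
      ∀ S : Set G, IsSigmaCompact S →
        ∀ (x : S) (W : Set S), IsOpen W → x ∈ W →
          ∃ V : Set S, IsClopen V ∧ x ∈ V ∧ V ⊆ W := by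
  classical
  have hpe : ∀ x : G, p (x, e) = x := by
    intro x; have h := hpq x x; rwa [hqe] at h
  -- `G` is regular.
  haveI hreg : RegularSpace G := by
    apply RegularSpace.of_exists_mem_nhds_isClosed_subset
    intro z s hs
    obtain ⟨O, hOs, hOo, hzO⟩ := mem_nhds_iff.mp hs
    have hO' : O ∈ 𝓝 (p (z, e)) := by rw [hpe z]; exact hOo.mem_nhds hzO
    have hpre : p ⁻¹' O ∈ 𝓝 (z, e) := hp.continuousAt.preimage_mem_nhds hO'
    obtain ⟨Vz, hVz, We, hWe, hVW⟩ := mem_nhds_prod_iff.mp hpre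
    refine ⟨closure Vz, mem_of_superset hVz subset_closure, isClosed_closure, ?_⟩
    intro z' hz'
    have hqpre : q ⁻¹' We ∈ 𝓝 (z', z') := by
      apply hq.continuousAt.preimage_mem_nhds; rw [hqe z']; exact hWe
    obtain ⟨N₁, hN₁, N₂, hN₂, hNW⟩ := mem_nhds_prod_iff.mp hqpre
    obtain ⟨v, hvN, hvV⟩ := mem_closure_iff_nhds.mp hz' (N₁ ∩ N₂) (inter_mem hN₁ hN₂)
    have hqvw : q (v, z') ∈ We := hNW ⟨hvN.1, mem_of_mem_nhds hN₂⟩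
    have : p (v, q (v, z')) ∈ O := hVW ⟨hvV, hqvw⟩
    rw [hpq v z'] at this
    exact hOs this
  by_cases hcpt : ∃ (z : G) (K : Set G), IsCompact K ∧ K ∈ 𝓝 z
  · -- some point has a compact neighborhood: `G` is locally compact
    left
    obtain ⟨z, K, hK, hKz⟩ := hcpt
    constructor
    intro w n hn
    have hχc : Continuous (fun y => p (w, q (z, y))) :=
      hp.comp (continuous_const.prodMk (hq.comp (continuous_const.prodMk continuous_id)))
    have hχ'c : Continuous (fun y => p (z, q (w, y))) :=
      hp.comp (continuous_const.prodMk (hq.comp (continuous_const.prodMk continuous_id)))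
    have hinv1 : ∀ y, p (z, q (w, p (w, q (z, y)))) = y := by
      intro y; rw [hqp w (q (z, y))]; exact hpq z y
    have hinv2 : ∀ y, p (w, q (z, p (z, q (w, y)))) = y := by
      intro y; rw [hqp z (q (w, y))]; exact hpq w y
    obtain ⟨O, hOK, hOo, hzO⟩ := mem_nhds_iff.mp hKz
    have himg : (fun y => p (w, q (z, y))) '' O = (fun y => p (z, q (w, y))) ⁻¹' O := by
      ext y; constructor
      · rintro ⟨o, ho, rfl⟩
        simpa only [mem_preimage, hinv1] using ho
      · intro hy
        exact ⟨p (z, q (w, y)), hy, hinv2 y⟩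
    have hwO : w ∈ (fun y => p (w, q (z, y))) '' O := by
      refine ⟨z, hzO, ?_⟩
      show p (w, q (z, z)) = w
      rw [hqe z]; exact hpe w
    have hKw : (fun y => p (w, q (z, y))) '' K ∈ 𝓝 w :=
      mem_nhds_iff.mpr ⟨_, image_mono hOK, by rw [himg]; exact hOo.preimage hχ'c, hwO⟩
    have hKwc : IsCompact ((fun y => p (w, q (z, y))) '' K) := hK.image hχc
    have hmem : n ∩ interior ((fun y => p (w, q (z, y))) '' K) ∈ 𝓝 w :=
      inter_mem hn (interior_mem_nhds.mpr hKw)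
    obtain ⟨t, ⟨htn, htc⟩, hts⟩ := (closed_nhds_basis w).mem_iff.mp hmem
    exact ⟨t, htn, fun y hy => (hts hy).1,
      hKwc.of_isClosed_subset htc (fun y hy => interior_subset (hts hy).2)⟩
  · -- no compact neighborhoods anywhere
    right
    -- every compact subset of `G` is totally disconnected
    have htd : ∀ K : Set G, IsCompact K → IsTotallyDisconnected K := by
      intro K hK t hts htp
      intro a ha b hb
      by_contra hab
      have hclt : IsCompact (closure t) :=
        hK.of_isClosed_subset isClosed_closure (closure_minimal hts hK.isClosed)
      have hψc : Continuous (fun y => p (e, q (a, y))) :=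
        hp.comp (continuous_const.prodMk (hq.comp (continuous_const.prodMk continuous_id)))
    -- the continuum `C` through `e`
      set C : Set G := (fun y => p (e, q (a, y))) '' closure t with hC
      have hCc : IsCompact C := hclt.image hψc
      have hCpre : IsPreconnected C := (htp.closure).image _ hψc.continuousOn
      have heC : e ∈ C := by
        refine ⟨a, subset_closure ha, ?_⟩
        show p (e, q (a, a)) = e
        rw [hqe a]; exact hpe e
      set b₀ : G := p (e, q (a, b)) with hb₀
      have hb₀C : b₀ ∈ C := ⟨b, subset_closure hb, rfl⟩
      have hne : e ≠ b₀ := by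
        intro h
        apply hab
        have h2 : p (e, q (a, a)) = p (e, q (a, b)) := by
          rw [hqe a, hpe e, ← hb₀]; exact h
        have h3 := congrArg (fun y => p (a, q (e, y))) h2
        simpa only [hqp e (q (a, a)), hqp e (q (a, b)), hpq a a, hpq a b] using h3
      obtain ⟨F, U, V, hF, hUo, hVo, heU, hbV, hUV, hcov⟩ := hsep e b₀ hne
      set N : Set G := U ∩ (fun g => p (b₀, q (e, g))) ⁻¹' V with hN
      have hNo : IsOpen N := hUo.inter (hVo.preimage
        (hp.comp (continuous_const.prodMk (hq.comp (continuous_const.prodMk continuous_id)))))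
      have heN : e ∈ N := by
        refine ⟨heU, ?_⟩
        simp only [mem_preimage]
        rw [hqe e, hpe b₀]; exact hbV
      have hPc : IsCompact ((fun w => p (e, w)) '' (q '' (C ×ˢ F))) :=
        ((hCc.prod hF).image hq).image (hp.comp (continuous_const.prodMk continuous_id))
      have hNP : N ⊆ (fun w => p (e, w)) '' (q '' (C ×ˢ F)) := by
        intro g hg
        set D : Set G := (fun c => p (c, q (e, g))) '' C with hD
        have hDpre : IsPreconnected D :=
          hCpre.image _ ((hp.comp (continuous_id.prodMk continuous_const)).continuousOn)
        have hgD : g ∈ D := ⟨e, heC, hpq e g⟩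
        have hb₀D : p (b₀, q (e, g)) ∈ D := ⟨b₀, hb₀C, rfl⟩
        have hDF : (D ∩ F).Nonempty := by
          by_contra hempty
          have hDsub : D ⊆ U ∪ V := by
            rw [hcov]
            intro d hd hdF
            exact hempty ⟨d, hd, hdF⟩
          obtain ⟨d, hdD, hdU, hdV⟩ :=
            hDpre U V hUo hVo hDsub ⟨g, hgD, hg.1⟩ ⟨p (b₀, q (e, g)), hb₀D, hg.2⟩
          exact disjoint_left.mp hUV hdU hdV
        obtain ⟨f, hfD, hfF⟩ := hDF
        obtain ⟨c, hcC, hcf⟩ := hfD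
        have hw : q (c, f) = q (e, g) := by rw [← hcf]; exact hqp c (q (e, g))
        exact ⟨q (e, g), ⟨(c, f), ⟨hcC, hfF⟩, hw⟩, hpq e g⟩
      exact hcpt ⟨e, _, hPc, mem_nhds_iff.mpr ⟨N, hNP, hNo, heN⟩⟩
    -- now the σ-compact zero-dimensionality
    intro S hS x W hW hxW
    haveI hS' : SigmaCompactSpace S := isSigmaCompact_iff_sigmaCompactSpace.mp hS
    haveI : NormalSpace S := inferInstance
    set B : Set S := Wᶜ with hB
    have hBc : IsClosed B := hW.isClosed_compl
    have hxB : x ∉ B := fun h => h hxW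
    -- compacts in the subspace `S` are totally disconnected
    have htdS : ∀ K' : Set S, IsCompact K' → IsTotallyDisconnected K' := by
      intro K' hK' t hts htp
      have h1 : IsPreconnected ((Subtype.val) '' t) :=
        htp.image _ continuous_subtype_val.continuousOn
      have h2 : IsCompact ((Subtype.val) '' K') := hK'.image continuous_subtype_val
      have h3 := htd _ h2 _ (image_mono hts) h1
      intro a ha b hb
      exact Subtype.val_injective (h3 (mem_image_of_mem _ ha) (mem_image_of_mem _ hb))
    -- the invariant for the recursive construction
    set Inv : Set S × Set S → Prop := fun UV =>
      IsOpen UV.1 ∧ IsOpen UV.2 ∧ Disjoint (closure UV.1) (closure UV.2) ∧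
        Disjoint (closure UV.1) B ∧ x ∉ closure UV.2 with hInvDef
    have hbase : Inv (∅, ∅) := by
      refine ⟨isOpen_empty, isOpen_empty, ?_, ?_, ?_⟩ <;>
        simp [closure_empty]
    -- the inductive step
    have step : ∀ (K' : Set S), IsCompact K' → ∀ UV : Set S × Set S, Inv UV →
        ∃ U' V' : Set S, Inv (U', V') ∧ x ∈ U' ∧ K' ⊆ U' ∪ V' ∧ UV.1 ⊆ U' ∧ UV.2 ⊆ V' := by
      rintro K' hK' ⟨U, V⟩ ⟨hUo, hVo, hdUV, hdUB, hxV⟩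
      set R₁ : Set S := K' ∩ (closure U ∪ {x}) with hR₁
      set R₂ : Set S := K' ∩ (closure V ∪ B) with hR₂
      have hR₁c : IsClosed R₁ := (hK'.isClosed).inter (isClosed_closure.union isClosed_singleton)
      have hR₂c : IsClosed R₂ := (hK'.isClosed).inter (isClosed_closure.union hBc)
      have hdR : Disjoint R₁ R₂ := by
        rw [disjoint_left]
        rintro z ⟨hzK, hz1⟩ ⟨-, hz2⟩
        rcases hz1 with hz1 | hz1
        · rcases hz2 with hz2 | hz2
          · exact disjoint_left.mp hdUV hz1 hz2
          · exact disjoint_left.mp hdUB hz1 hz2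
        · rcases hz2 with hz2 | hz2
          · exact hxV (mem_singleton_iff.mp hz1 ▸ hz2)
          · exact hxB (mem_singleton_iff.mp hz1 ▸ hz2)
      haveI hcs : CompactSpace ↥K' := isCompact_iff_compactSpace.mp hK'
      haveI : TotallyDisconnectedSpace ↥K' := by
        constructor
        intro t _ htp
        have h1 : IsPreconnected ((Subtype.val) '' t) :=
          htp.image _ continuous_subtype_val.continuousOn
        have h3 := htdS K' hK' _ (by rintro y ⟨s, -, rfl⟩; exact s.2) h1
        intro a ha b hb
        exact Subtype.val_injective (h3 (mem_image_of_mem _ ha) (mem_image_of_mem _ hb))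
      obtain ⟨P', hP'cl, hAP', hP'B⟩ := aux_clopen_sep (Y := ↥K')
        (A := Subtype.val ⁻¹' R₁) (B := Subtype.val ⁻¹' R₂)
        (hR₁c.preimage continuous_subtype_val) (hR₂c.preimage continuous_subtype_val)
        (hdR.preimage _)
      set P : Set S := Subtype.val '' P' with hP
      set Q : Set S := Subtype.val '' P'ᶜ with hQ
      have hPK : P ⊆ K' := by rintro z ⟨s, -, rfl⟩; exact s.2
      have hQK : Q ⊆ K' := by rintro z ⟨s, -, rfl⟩; exact s.2
      have hPc : IsCompact P := (hP'cl.1.isCompact).image continuous_subtype_val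
      have hQc : IsCompact Q := (hP'cl.2.isClosed_compl.isCompact).image continuous_subtype_val
      have hPQ : P ∪ Q = K' := by
        rw [hP, hQ, ← image_union, union_compl_self, image_univ, Subtype.range_val]
      have hdPQ : Disjoint P Q := by
        rw [disjoint_left]
        rintro z ⟨s, hs, rfl⟩ ⟨s', hs', hss⟩
        rw [Subtype.val_injective hss] at hs'
        exact hs' hs
      have hR₁P : R₁ ⊆ P := fun z hz => ⟨⟨z, hz.1⟩, hAP' hz, rfl⟩
      have hR₂Q : R₂ ⊆ Q := by
        intro z hz
        refine ⟨⟨z, hz.1⟩, ?_, rfl⟩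
        intro hzP'
        exact disjoint_left.mp hP'B hzP' hz
      set C₁ : Set S := P ∪ (closure U ∪ {x}) with hC₁
      set C₂ : Set S := Q ∪ (closure V ∪ B) with hC₂
      have hC₁c : IsClosed C₁ := (hPc.isClosed).union (isClosed_closure.union isClosed_singleton)
      have hC₂c : IsClosed C₂ := (hQc.isClosed).union (isClosed_closure.union hBc)
      have hdC : Disjoint C₁ C₂ := by
        rw [disjoint_left]
        rintro z hz1 hz2
        rcases hz1 with hz1 | hz1
        · rcases hz2 with hz2 | hz2
          · exact disjoint_left.mp hdPQ hz1 hz2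
          · exact disjoint_left.mp hdPQ hz1 (hR₂Q ⟨hPK hz1, hz2⟩)
        · rcases hz2 with hz2 | hz2
          · exact disjoint_left.mp hdPQ (hR₁P ⟨hQK hz2, hz1⟩) hz2
          · rcases hz1 with hz1 | hz1
            · rcases hz2 with hz2 | hz2
              · exact disjoint_left.mp hdUV hz1 hz2
              · exact disjoint_left.mp hdUB hz1 hz2
            · rcases hz2 with hz2 | hz2
              · exact hxV (mem_singleton_iff.mp hz1 ▸ hz2)
              · exact hxB (mem_singleton_iff.mp hz1 ▸ hz2)
      obtain ⟨u₁, v₁, hu₁, hv₁, hC₁u, hC₂v, hd₁⟩ := NormalSpace.normal C₁ C₂ hC₁c hC₂c hdC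
      have hclu₁ : closure u₁ ⊆ v₁ᶜ :=
        closure_minimal (fun y hy hyv => disjoint_left.mp hd₁ hy hyv) hv₁.isClosed_compl
      obtain ⟨u₂, v₂, hu₂, hv₂, hclu₂, hC₂v₂, hd₂⟩ := NormalSpace.normal (closure u₁) C₂
        isClosed_closure hC₂c
        (by rw [disjoint_left]; intro z hz hz2; exact hclu₁ hz (hC₂v hz2))
      have hclv₂ : closure v₂ ⊆ u₂ᶜ :=
        closure_minimal (fun y hy hyu => disjoint_left.mp hd₂ hyu hy) hu₂.isClosed_compl
      have hxC₁ : x ∈ C₁ := Or.inr (Or.inr rfl)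
      refine ⟨u₁, v₂, ⟨hu₁, hv₂, ?_, ?_, ?_⟩, hC₁u hxC₁, ?_, ?_, ?_⟩
      · rw [disjoint_left]
        intro z hz hz2
        exact hclv₂ hz2 (hclu₂ hz)
      · rw [disjoint_left]
        intro z hz hzB
        exact disjoint_left.mp hd₂ (hclu₂ hz) (hC₂v₂ (Or.inr (Or.inr hzB)))
      · intro hx
        exact hclv₂ hx (hclu₂ (subset_closure (hC₁u hxC₁)))
      · intro z hz
        rw [← hPQ] at hz
        rcases hz with hz | hz
        · exact Or.inl (hC₁u (Or.inl hz))
        · exact Or.inr (hC₂v₂ (Or.inl hz))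
      · exact fun z hz => hC₁u (Or.inr (Or.inl (subset_closure hz)))
      · exact fun z hz => hC₂v₂ (Or.inr (Or.inl (subset_closure hz)))
    -- the recursion
    choose F1 F2 hF using fun (n : ℕ) (UV : {UV : Set S × Set S // Inv UV}) =>
      step (compactCovering S n) (isCompact_compactCovering S n) UV.1 UV.2
    let f : ℕ → {UV : Set S × Set S // Inv UV} :=
      fun n => Nat.rec ⟨(∅, ∅), hbase⟩ (fun n prev => ⟨(F1 n prev, F2 n prev), (hF n prev).1⟩) n
    have hxf : ∀ n, x ∈ (f (n + 1)).1.1 := fun n => (hF n (f n)).2.1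
    have hcovf : ∀ n, compactCovering S n ⊆ (f (n + 1)).1.1 ∪ (f (n + 1)).1.2 :=
      fun n => (hF n (f n)).2.2.1
    have hmono1 : ∀ n, (f n).1.1 ⊆ (f (n + 1)).1.1 := fun n => (hF n (f n)).2.2.2.1
    have hmono2 : ∀ n, (f n).1.2 ⊆ (f (n + 1)).1.2 := fun n => (hF n (f n)).2.2.2.2
    have hle1 : ∀ n m, n ≤ m → (f n).1.1 ⊆ (f m).1.1 := by
      intro n m h
      induction m, h using Nat.le_induction with
      | base => exact subset_rfl
      | succ m hm ih => exact ih.trans (hmono1 m)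
    have hle2 : ∀ n m, n ≤ m → (f n).1.2 ⊆ (f m).1.2 := by
      intro n m h
      induction m, h using Nat.le_induction with
      | base => exact subset_rfl
      | succ m hm ih => exact ih.trans (hmono2 m)
    set U : Set S := ⋃ n, (f n).1.1 with hU
    set Vv : Set S := ⋃ n, (f n).1.2 with hVv
    have hUo : IsOpen U := isOpen_iUnion (fun n => (f n).2.1)
    have hVo : IsOpen Vv := isOpen_iUnion (fun n => (f n).2.2.1)
    have hxU : x ∈ U := mem_iUnion.mpr ⟨1, hxf 0⟩
    have hdisj : Disjoint U Vv := by
      rw [disjoint_left]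
      intro z hz1 hz2
      obtain ⟨n, hn⟩ := mem_iUnion.mp hz1
      obtain ⟨m, hm⟩ := mem_iUnion.mp hz2
      exact disjoint_left.mp (f (max n m)).2.2.2.1
        (subset_closure (hle1 n _ (le_max_left n m) hn))
        (subset_closure (hle2 m _ (le_max_right n m) hm))
    have hcover : U ∪ Vv = univ := by
      apply eq_univ_of_forall
      intro z
      have hz : z ∈ ⋃ n, compactCovering S n := by rw [iUnion_compactCovering]; trivial
      obtain ⟨n, hn⟩ := mem_iUnion.mp hz
      rcases hcovf n hn with h | h
      · exact Or.inl (mem_iUnion.mpr ⟨n + 1, h⟩)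
      · exact Or.inr (mem_iUnion.mpr ⟨n + 1, h⟩)
    have hUcV : Uᶜ = Vv := by
      apply Subset.antisymm
      · intro z hz
        rcases (eq_univ_iff_forall.mp hcover z) with h | h
        · exact absurd h hz
        · exact h
      · intro z hz hzU
        exact disjoint_left.mp hdisj hzU hz
    refine ⟨U, ⟨?_, hUo⟩, hxU, ?_⟩
    · rw [← isOpen_compl_iff, hUcV]
      exact hVo
    · intro z hz
      obtain ⟨n, hn⟩ := mem_iUnion.mp hz
      have hzB : z ∉ B := fun hB' =>
        disjoint_left.mp (f n).2.2.2.2.1 (subset_closure hn) hB'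
      simpa [hB] using hzB
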